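/- Karlin–McGregor representation of the Ehrenfest semigroup (Theorem 3.3(a) via the birth-and-death generator): let Q be the (N+1)×(N+1) real matrix indexed by {0,…,N} with Q_{i,i+1} = λα(N−i), Q_{i,i−1} = λβ·i, Q_{i,i} = −λα(N−i) − λβ·i, and Q_{i,j} = 0 otherwise. Then for every t ≥ 0 and all i, j ∈ {0,…,N}, the (i,j) entry of the matrix exponential exp(t·Q) equals p_{ij}(t). -/

import Mathlib

open Finset Polynomial Matrix

/-- The Krawtchouk polynomial `K_l(x; N; p)`, defined via the hypergeometric sum. -/
noncomputable def krawtchouk (N : ℕ) (p : ℝ) (l x : ℕ) : ℝ :=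
  ∑ k ∈ Finset.range (N + 1),
    ((ascPochhammer ℝ k).eval (-(l : ℝ)) * (ascPochhammer ℝ k).eval (-(x : ℝ))) /
      ((ascPochhammer ℝ k).eval (-(N : ℝ)) * (Nat.factorial k : ℝ)) * (1 / p) ^ k

/-- Transition probabilities `p_{ij}(t)` of the continuous-time Ehrenfest process,
where `p = α/(α+β)` and `q = 1 - p`. -/
noncomputable def ehrenfestP (N : ℕ) (p q lam α β : ℝ) (i j : ℕ) (t : ℝ) : ℝ :=
  (N.choose j : ℝ) * (p / q) ^ j *
    ∑ x ∈ Finset.range (N + 1),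
      (N.choose x : ℝ) * p ^ x * q ^ (N - x) * krawtchouk N p i x * krawtchouk N p j x *
        Real.exp (-(lam * (α + β) * (x : ℝ) * t))

/-- Karlin–McGregor representation: the matrix exponential of the birth-and-death
generator of the Ehrenfest process has entries `p_{ij}(t)`. -/
lemma asc_succ_left_eval (k : ℕ) (y : ℝ) :
    (ascPochhammer ℝ (k+1)).eval y = y * (ascPochhammer ℝ k).eval (y+1) := by
  rw [ascPochhammer_succ_left]; simp [Polynomial.eval_comp]

lemma pochN_ne (N k : ℕ) (hk : k ≤ N) : (ascPochhammer ℝ k).eval (-(N:ℝ)) ≠ 0 := by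
  rw [Ne, ascPochhammer_eval_eq_zero_iff]
  push_neg
  intro m hm
  rw [neg_neg]
  exact_mod_cast fun h => absurd (Nat.cast_injective h : m = N) (by omega)

noncomputable def krawR (N : ℕ) (p : ℝ) (r : ℝ) (x : ℕ) : ℝ :=
  ∑ k ∈ Finset.range (N + 1),
    ((ascPochhammer ℝ k).eval (-r) * (ascPochhammer ℝ k).eval (-(x : ℝ))) /
      ((ascPochhammer ℝ k).eval (-(N : ℝ)) * (Nat.factorial k : ℝ)) * (1 / p) ^ k

lemma krawtchouk_eq_krawR (N : ℕ) (p : ℝ) (l x : ℕ) :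
    krawtchouk N p l x = krawR N p (l:ℝ) x := rfl

noncomputable def tele (N : ℕ) (p r : ℝ) (x : ℕ) : ℕ → ℝ
  | 0 => 0
  | (m+1) => (1/p)^m * (ascPochhammer ℝ (m+1)).eval (-(x:ℝ)) * (ascPochhammer ℝ m).eval (-r) /
      ((ascPochhammer ℝ m).eval (-(N:ℝ)) * (Nat.factorial m : ℝ))

lemma krawR_rec (N : ℕ) (p : ℝ) (hp : p ≠ 0) (r : ℝ) (x : ℕ) (hx : x ≤ N) :
    p * ((N:ℝ) - r) * krawR N p (r+1) x + (1-p) * r * krawR N p (r-1) x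
      - (p * ((N:ℝ) - r) + (1-p) * r) * krawR N p r x + (x:ℝ) * krawR N p r x = 0 := by
  classical
  have key : ∀ k ∈ Finset.range (N+1),
      p * ((N:ℝ) - r) * ((ascPochhammer ℝ k).eval (-(r+1)) * (ascPochhammer ℝ k).eval (-(x:ℝ)) /
          ((ascPochhammer ℝ k).eval (-(N:ℝ)) * (Nat.factorial k : ℝ)) * (1/p)^k)
      + (1-p) * r * ((ascPochhammer ℝ k).eval (-(r-1)) * (ascPochhammer ℝ k).eval (-(x:ℝ)) /
          ((ascPochhammer ℝ k).eval (-(N:ℝ)) * (Nat.factorial k : ℝ)) * (1/p)^k)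
      - (p * ((N:ℝ) - r) + (1-p) * r) * ((ascPochhammer ℝ k).eval (-r) * (ascPochhammer ℝ k).eval (-(x:ℝ)) /
          ((ascPochhammer ℝ k).eval (-(N:ℝ)) * (Nat.factorial k : ℝ)) * (1/p)^k)
      + (x:ℝ) * ((ascPochhammer ℝ k).eval (-r) * (ascPochhammer ℝ k).eval (-(x:ℝ)) /
          ((ascPochhammer ℝ k).eval (-(N:ℝ)) * (Nat.factorial k : ℝ)) * (1/p)^k)
      = tele N p r x k - tele N p r x (k+1) := by
    intro k hk
    rw [Finset.mem_range] at hk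
    match k with
    | 0 =>
      show _ = tele N p r x 0 - tele N p r x 1
      rw [tele, tele]
      norm_num [ascPochhammer_zero, ascPochhammer_one]
    | (m+1) =>
      have hmN : m + 1 ≤ N := by omega
      show _ = tele N p r x (m+1) - tele N p r x (m+2)
      rw [tele, tele]
      have hw0 : (ascPochhammer ℝ m).eval (-(N:ℝ)) ≠ 0 := pochN_ne N m (by omega)
      have hNm : (-(N:ℝ) + m) ≠ 0 := by
        have : (m:ℝ) < (N:ℝ) := by exact_mod_cast (by omega : m < N)
        linarith
      have hfac : ((Nat.factorial m : ℝ)) ≠ 0 := by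
        exact_mod_cast Nat.factorial_ne_zero m
      have hm1 : ((m:ℝ)+1) ≠ 0 := by positivity
      have h1 : (ascPochhammer ℝ (m+1)).eval (-(r+1)) = (-(r+1)) * (ascPochhammer ℝ m).eval (-r) := by
        rw [asc_succ_left_eval]; ring_nf
      have h2 : (ascPochhammer ℝ (m+1)).eval (-(r-1)) = (ascPochhammer ℝ m).eval (1-r) * (1 - r + m) := by
        rw [show -(r-1) = 1 - r by ring, ascPochhammer_succ_eval]
      have h3 : (ascPochhammer ℝ (m+1)).eval (-r) = (-r) * (ascPochhammer ℝ m).eval (1-r) := by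
        rw [asc_succ_left_eval]; ring_nf
      have h4 : (ascPochhammer ℝ (m+1)).eval (-r) = (ascPochhammer ℝ m).eval (-r) * (-r + m) :=
        ascPochhammer_succ_eval m (-r)
      have h5 : (ascPochhammer ℝ (m+1)).eval (-(N:ℝ)) = (ascPochhammer ℝ m).eval (-(N:ℝ)) * (-(N:ℝ) + m) :=
        ascPochhammer_succ_eval m (-(N:ℝ))
      have h6 : (ascPochhammer ℝ (m+1+1)).eval (-(x:ℝ)) = (ascPochhammer ℝ (m+1)).eval (-(x:ℝ)) * (-(x:ℝ) + (m+1)) := by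
        rw [ascPochhammer_succ_eval]; push_cast; ring_nf
      set a : ℝ := (ascPochhammer ℝ m).eval (-r)
      set b : ℝ := (ascPochhammer ℝ m).eval (1-r)
      set u : ℝ := (ascPochhammer ℝ (m+1)).eval (-(x:ℝ))
      set w : ℝ := (ascPochhammer ℝ m).eval (-(N:ℝ))
      have hrb : r * b = a * (r - m) := by
        have h34 : (-r) * b = a * (-r + m) := h3 ▸ h4
        linarith [h34]
      have hnum : p*((N:ℝ)-r)*(-(r+1))*a + (1-p)*r*(b*(1-r+m))
            - (p*((N:ℝ)-r)+(1-p)*r)*((-r)*b) + (x:ℝ)*((-r)*b)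
          = p*a*(-(N:ℝ)+m)*((m:ℝ)+1) - (-(x:ℝ)+((m:ℝ)+1))*((-r)*b) := by
        linear_combination (p*((N:ℝ)-r-(m:ℝ)-1)) * hrb
      rw [h1, h2, h3, h5, h6, Nat.factorial_succ]
      push_cast
      set E : ℝ := (1/p)^(m+1) * u / (w * (-(N:ℝ)+m) * (((m:ℝ)+1)*(Nat.factorial m : ℝ))) with hE
      calc p * ((N:ℝ) - r) * ((-(r+1)) * a * u / (w * (-(N:ℝ)+m) * (((m:ℝ)+1)*(Nat.factorial m : ℝ))) * (1/p)^(m+1))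
            + (1-p) * r * ((b * (1-r+(m:ℝ))) * u / (w * (-(N:ℝ)+m) * (((m:ℝ)+1)*(Nat.factorial m : ℝ))) * (1/p)^(m+1))
            - (p * ((N:ℝ) - r) + (1-p) * r) * (((-r) * b) * u / (w * (-(N:ℝ)+m) * (((m:ℝ)+1)*(Nat.factorial m : ℝ))) * (1/p)^(m+1))
            + (x:ℝ) * (((-r) * b) * u / (w * (-(N:ℝ)+m) * (((m:ℝ)+1)*(Nat.factorial m : ℝ))) * (1/p)^(m+1))
          = (p*((N:ℝ)-r)*(-(r+1))*a + (1-p)*r*(b*(1-r+(m:ℝ)))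
              - (p*((N:ℝ)-r)+(1-p)*r)*((-r)*b) + (x:ℝ)*((-r)*b)) * E := by
            rw [hE]; ring
        _ = (p*a*(-(N:ℝ)+m)*((m:ℝ)+1) - (-(x:ℝ)+((m:ℝ)+1))*((-r)*b)) * E := by rw [hnum]
        _ = (1/p)^m * u * a / (w * (Nat.factorial m : ℝ))
            - (1/p)^(m+1) * (u * (-(x:ℝ)+((m:ℝ)+1))) * ((-r)*b) / (w * (-(N:ℝ)+m) * (((m:ℝ)+1)*(Nat.factorial m : ℝ))) := by
            rw [hE]
            field_simp
            ring_nf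
            field_simp
  have vanish : tele N p r x (N+1) = 0 := by
    rw [tele]
    rw [ascPochhammer_eval_neg_coe_nat_of_lt (by omega : x < N+1)]
    simp
  have lhs_eq : p * ((N:ℝ) - r) * krawR N p (r+1) x + (1-p) * r * krawR N p (r-1) x
      - (p * ((N:ℝ) - r) + (1-p) * r) * krawR N p r x + (x:ℝ) * krawR N p r x
      = ∑ k ∈ Finset.range (N+1), (tele N p r x k - tele N p r x (k+1)) := by
    rw [← Finset.sum_congr rfl key]
    unfold krawR
    rw [Finset.mul_sum, Finset.mul_sum, Finset.mul_sum, Finset.mul_sum]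
    rw [← Finset.sum_add_distrib, ← Finset.sum_sub_distrib, ← Finset.sum_add_distrib]
  rw [lhs_eq, Finset.sum_range_sub' (tele N p r x), vanish]
  rw [tele]
  ring

lemma kraw_symm (N : ℕ) (p : ℝ) (l x : ℕ) : krawtchouk N p l x = krawtchouk N p x l := by
  unfold krawtchouk
  exact Finset.sum_congr rfl (fun k _ => by ring)

lemma kraw_zero (N : ℕ) (p : ℝ) (x : ℕ) : krawtchouk N p 0 x = 1 := by
  unfold krawtchouk
  rw [Finset.sum_eq_single 0]
  · norm_num [ascPochhammer_zero]
  · intro k _ hk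
    rw [show -((0:ℕ):ℝ) = 0 by norm_num, ascPochhammer_eval_zero, if_neg hk]
    simp
  · intro h; exact absurd (Finset.mem_range.mpr (by omega)) h

/-- `x K_l(x)` expanded by the three-term recurrence (ℕ indices, nat subtraction). -/
lemma kraw_xK (N : ℕ) (p : ℝ) (hp : p ≠ 0) (l x : ℕ) (hx : x ≤ N) :
    (x:ℝ) * krawtchouk N p l x
      = (p * ((N:ℝ) - l) + (1-p) * l) * krawtchouk N p l x
        - p * ((N:ℝ) - l) * krawtchouk N p (l+1) x
        - (1-p) * l * krawtchouk N p (l-1) x := by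
  match l with
  | 0 =>
    have h := krawR_rec N p hp 0 x hx
    simp only [krawtchouk_eq_krawR]
    norm_num at h ⊢
    linarith [h]
  | (m+1) =>
    have h := krawR_rec N p hp ((m:ℝ)+1) x hx
    simp only [krawtchouk_eq_krawR, Nat.add_sub_cancel]
    push_cast
    rw [show (m:ℝ)+1-1 = (m:ℝ) by ring] at h
    rw [show (m:ℝ)+1+1 = ((m:ℝ)+1)+1 by ring] at h
    linarith [h]

noncomputable def wfun (N : ℕ) (p q : ℝ) (x : ℕ) : ℝ := (N.choose x : ℝ) * p^x * q^(N-x)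

noncomputable def gsum (N : ℕ) (p q : ℝ) (a b : ℕ) : ℝ :=
  ∑ z ∈ Finset.range (N+1), wfun N p q z * krawtchouk N p a z * krawtchouk N p b z

lemma wfun_sum (N : ℕ) (p q : ℝ) (hpq : p + q = 1) :
    ∑ z ∈ Finset.range (N+1), wfun N p q z = 1 := by
  have h := add_pow p q N
  rw [hpq, one_pow] at h
  rw [show ∑ z ∈ Finset.range (N+1), wfun N p q z
    = ∑ z ∈ Finset.range (N+1), p ^ z * q ^ (N - z) * (N.choose z : ℝ) from
    Finset.sum_congr rfl (fun k _ => by unfold wfun; ring)]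
  exact h.symm

lemma wstep (N i : ℕ) (hi : i < N) (p q : ℝ) :
    wfun N p q i * ((N:ℝ) - i) * p = wfun N p q (i+1) * ((i:ℝ)+1) * q := by
  unfold wfun
  have hc : ((N.choose (i+1)) : ℝ) * ((i:ℝ)+1) = (N.choose i : ℝ) * ((N:ℝ) - (i:ℝ)) := by
    have h := Nat.choose_succ_right_eq N i
    have hcast : ((N.choose (i+1) : ℝ)) * ((i:ℝ)+1) = (N.choose i : ℝ) * ((N - i : ℕ) : ℝ) := by
      exact_mod_cast congrArg (fun z : ℕ => (z : ℝ)) h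
    rw [hcast, Nat.cast_sub hi.le]
  have hq : q^(N-i) = q^(N-(i+1)) * q := by
    rw [← pow_succ]; congr 1; omega
  rw [hq, pow_succ]
  linear_combination (-(p^i * p * q^(N-(i+1)) * q)) * hc

lemma row_sum (n i : ℕ) (hi : i < n) (A B C : ℝ) (f : ℕ → ℝ) :
    ∑ k ∈ Finset.range n, ((if k = i+1 then A else if k+1 = i then B else if i = k then C else 0) * f k)
    = (if i+1 < n then A * f (i+1) else 0) + (if 0 < i then B * f (i-1) else 0) + C * f i := by
  have point : ∀ k ∈ Finset.range n,
      (if k = i+1 then A else if k+1 = i then B else if i = k then C else 0) * f k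
      = (if k = i+1 then A * f k else 0) + ((if 0 < i then (if k = i-1 then B * f k else 0) else 0)
        + (if k = i then C * f k else 0)) := by
    intro k _
    split_ifs <;> (first | (exfalso; omega) | ring)
  rw [Finset.sum_congr rfl point, Finset.sum_add_distrib, Finset.sum_add_distrib,
    Finset.sum_ite_eq' (Finset.range n) (i+1) (fun k => A * f k),
    Finset.sum_ite_eq' (Finset.range n) i (fun k => C * f k),
    if_pos (Finset.mem_range.mpr hi)]
  have hmid : (∑ x ∈ Finset.range n, if 0 < i then if x = i - 1 then B * f x else 0 else 0)
      = if 0 < i then B * f (i-1) else 0 := by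
    by_cases h0 : 0 < i
    · simp only [if_pos h0]
      rw [Finset.sum_ite_eq' (Finset.range n) (i-1) (fun k => B * f k)]
      rw [if_pos (Finset.mem_range.mpr (by omega))]
    · simp only [if_neg h0, Finset.sum_const_zero]
  rw [hmid]
  have hA : (if i+1 ∈ Finset.range n then A * f (i+1) else 0) = (if i+1 < n then A * f (i+1) else 0) := by
    simp [Finset.mem_range]
  rw [hA]
  ring

lemma row_val (N : ℕ) (p c : ℝ) (hp : p ≠ 0) (i x : ℕ) (hi : i ≤ N) (hx : x ≤ N) :
    (if i+1 < N+1 then c*p*((N:ℝ)-i) * krawtchouk N p (i+1) x else 0)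
    + (if 0 < i then c*(1-p)*(i:ℝ) * krawtchouk N p (i-1) x else 0)
    + (-(c*p*((N:ℝ)-i)) - c*(1-p)*i) * krawtchouk N p i x
    = krawtchouk N p i x * (-(c * x)) := by
  have hx' := kraw_xK N p hp i x hx
  by_cases h1 : i+1 < N+1
  · rw [if_pos h1]
    by_cases h0 : 0 < i
    · rw [if_pos h0]; linear_combination c * hx'
    · rw [if_neg h0]
      have h00 : i = 0 := by omega
      subst h00
      push_cast at hx' ⊢
      linear_combination c * hx'
  · rw [if_neg h1]
    have hiN : i = N := by omega
    subst hiN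
    by_cases h0 : 0 < i
    · rw [if_pos h0]; linear_combination c * hx'
    · rw [if_neg h0]
      have h00 : i = 0 := by omega
      subst h00
      push_cast at hx' ⊢
      linear_combination c * hx'

noncomputable def Kmat (N : ℕ) (p : ℝ) : Matrix (Fin (N+1)) (Fin (N+1)) ℝ :=
  Matrix.of fun i x => krawtchouk N p (i:ℕ) (x:ℕ)

noncomputable def Dmat (N : ℕ) (c : ℝ) : Matrix (Fin (N+1)) (Fin (N+1)) ℝ :=
  Matrix.diagonal fun x => -(c * ((x:ℕ):ℝ))

noncomputable def Pmat (N : ℕ) (p : ℝ) : Matrix (Fin (N+1)) (Fin (N+1)) ℝ :=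
  Matrix.diagonal fun x => wfun N p (1-p) (x:ℕ)

lemma QK (N : ℕ) (lam α β p c : ℝ) (hp : p ≠ 0)
    (hα : lam * α = c * p) (hβ : lam * β = c * (1-p))
    (Q : Matrix (Fin (N+1)) (Fin (N+1)) ℝ)
    (hQ : ∀ i j : Fin (N + 1),
      Q i j =
        if (j : ℕ) = (i : ℕ) + 1 then lam * α * ((N : ℝ) - (i : ℕ))
        else if (j : ℕ) + 1 = (i : ℕ) then lam * β * (i : ℕ)
        else if i = j then -(lam * α * ((N : ℝ) - (i : ℕ))) - lam * β * (i : ℕ)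
        else 0) :
    Q * Kmat N p = Kmat N p * Dmat N c := by
  ext i x
  rw [Matrix.mul_apply]
  simp only [Dmat]
  rw [Matrix.mul_diagonal]
  have conv : ∀ k : Fin (N+1), Q i k * Kmat N p k x
      = (fun k' : ℕ => (if k' = (i:ℕ)+1 then lam*α*((N:ℝ)-(i:ℕ))
          else if k'+1 = (i:ℕ) then lam*β*((i:ℕ):ℝ)
          else if (i:ℕ) = k' then -(lam*α*((N:ℝ)-(i:ℕ))) - lam*β*((i:ℕ):ℝ)
          else 0) * krawtchouk N p k' (x:ℕ)) (k:ℕ) := by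
    intro k
    rw [hQ]
    simp only [Kmat, Matrix.of_apply, Fin.ext_iff]
  have step1 : (∑ k : Fin (N+1), Q i k * Kmat N p k x)
      = ∑ k ∈ Finset.range (N+1),
          ((if k = (i:ℕ)+1 then lam*α*((N:ℝ)-(i:ℕ))
            else if k+1 = (i:ℕ) then lam*β*((i:ℕ):ℝ)
            else if (i:ℕ) = k then -(lam*α*((N:ℝ)-(i:ℕ))) - lam*β*((i:ℕ):ℝ)
            else 0) * krawtchouk N p k (x:ℕ)) :=
    (Finset.sum_congr rfl (fun k _ => conv k)).trans
      (Fin.sum_univ_eq_sum_range (fun k' : ℕ =>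
        (if k' = (i:ℕ)+1 then lam*α*((N:ℝ)-(i:ℕ))
          else if k'+1 = (i:ℕ) then lam*β*((i:ℕ):ℝ)
          else if (i:ℕ) = k' then -(lam*α*((N:ℝ)-(i:ℕ))) - lam*β*((i:ℕ):ℝ)
          else 0) * krawtchouk N p k' (x:ℕ)) (N+1))
  rw [step1,
    row_sum (N+1) (i:ℕ) i.isLt _ _ _ (fun k' => krawtchouk N p k' (x:ℕ))]
  rw [hα, hβ]
  simp only [Kmat, Matrix.of_apply]
  exact row_val N p c hp (i:ℕ) (x:ℕ) (by omega) (by omega)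

lemma PQsym (N : ℕ) (lam α β p c : ℝ)
    (hα : lam * α = c * p) (hβ : lam * β = c * (1-p))
    (Q : Matrix (Fin (N+1)) (Fin (N+1)) ℝ)
    (hQ : ∀ i j : Fin (N + 1),
      Q i j =
        if (j : ℕ) = (i : ℕ) + 1 then lam * α * ((N : ℝ) - (i : ℕ))
        else if (j : ℕ) + 1 = (i : ℕ) then lam * β * (i : ℕ)
        else if i = j then -(lam * α * ((N : ℝ) - (i : ℕ))) - lam * β * (i : ℕ)
        else 0) :
    Pmat N p * Q = Qᵀ * Pmat N p := by
  ext i j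
  simp only [Pmat]
  rw [Matrix.diagonal_mul, Matrix.mul_diagonal, Matrix.transpose_apply, hQ i j, hQ j i]
  have hi := i.isLt
  have hj := j.isLt
  rw [hα, hβ]
  by_cases hc1 : (j:ℕ) = (i:ℕ)+1
  · rw [if_pos hc1, if_neg (show ¬((i:ℕ) = (j:ℕ)+1) by omega),
      if_pos (show (i:ℕ)+1 = (j:ℕ) by omega), hc1]
    have hw := wstep N (i:ℕ) (by omega) p (1-p)
    push_cast
    linear_combination c * hw
  · rw [if_neg hc1]
    by_cases hc2 : (j:ℕ)+1 = (i:ℕ)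
    · rw [if_pos hc2, if_pos (show (i:ℕ) = (j:ℕ)+1 by omega),
        show (i:ℕ) = (j:ℕ)+1 by omega]
      have hw := wstep N (j:ℕ) (by omega) p (1-p)
      push_cast
      linear_combination (-c) * hw
    · rw [if_neg hc2]
      by_cases hc3 : i = j
      · subst hc3
        rw [if_pos (rfl : i = i), if_neg (show ¬((i:ℕ) = (i:ℕ)+1) by omega),
          if_neg (show ¬((i:ℕ)+1 = (i:ℕ)) by omega)]
        ring
      · rw [if_neg hc3, if_neg (show ¬((i:ℕ) = (j:ℕ)+1) by omega),
          if_neg (show ¬((i:ℕ)+1 = (j:ℕ)) by omega), if_neg (fun h => hc3 h.symm)]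
        ring

lemma gsum_offdiag (N : ℕ) (p c : ℝ) (hc : c ≠ 0)
    (Q : Matrix (Fin (N+1)) (Fin (N+1)) ℝ)
    (hQK : Q * Kmat N p = Kmat N p * Dmat N c)
    (hPQ : Pmat N p * Q = Qᵀ * Pmat N p) :
    ∀ a b : ℕ, a ≤ N → b ≤ N → a ≠ b → gsum N p (1-p) a b = 0 := by
  set K := Kmat N p
  set P := Pmat N p
  set D := Dmat N c
  set G := Kᵀ * P * K with hG
  have hGD : G * D = D * G := by
    calc Kᵀ * P * K * D = Kᵀ * P * (K * D) := by rw [Matrix.mul_assoc]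
      _ = Kᵀ * P * (Q * K) := by rw [hQK]
      _ = Kᵀ * (P * Q) * K := by rw [Matrix.mul_assoc, ← Matrix.mul_assoc P Q K, ← Matrix.mul_assoc]
      _ = Kᵀ * (Qᵀ * P) * K := by rw [hPQ]
      _ = (Kᵀ * Qᵀ) * P * K := by rw [Matrix.mul_assoc ((Kmat N p)ᵀ) (Qᵀ) (Pmat N p)]
      _ = (Q * K)ᵀ * P * K := by rw [Matrix.transpose_mul]
      _ = (K * D)ᵀ * P * K := by rw [hQK]
      _ = (Dᵀ * Kᵀ) * P * K := by rw [Matrix.transpose_mul]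
      _ = D * (Kᵀ * P * K) := by
          rw [show Dᵀ = D from Matrix.diagonal_transpose _]
          rw [Matrix.mul_assoc, Matrix.mul_assoc, Matrix.mul_assoc]
  have hGoff : ∀ x y : Fin (N+1), x ≠ y → G x y = 0 := by
    intro x y hxy
    have h := congrFun (congrFun hGD x) y
    simp only [D, Dmat] at h
    rw [Matrix.mul_diagonal, Matrix.diagonal_mul] at h
    have hfac : G x y * ((-(c * ((y:ℕ):ℝ))) - (-(c * ((x:ℕ):ℝ)))) = 0 := by
      linear_combination h
    rcases mul_eq_zero.mp hfac with h0 | h0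
    · exact h0
    · exfalso
      have hvy : ((y:ℕ):ℝ) = ((x:ℕ):ℝ) := by
        have := mul_left_cancel₀ hc (by linarith : c * ((y:ℕ):ℝ) = c * ((x:ℕ):ℝ))
        exact this
      exact hxy (Fin.ext (by exact_mod_cast hvy.symm))
  have hGentry : ∀ x y : Fin (N+1), G x y = gsum N p (1-p) (x:ℕ) (y:ℕ) := by
    intro x y
    show (Kᵀ * P * K) x y = _
    rw [Matrix.mul_apply]
    have conv : ∀ k : Fin (N+1), (Kᵀ * P) x k * K k y
        = (fun z : ℕ => wfun N p (1-p) z * krawtchouk N p (x:ℕ) z * krawtchouk N p (y:ℕ) z) (k:ℕ) := by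
      intro k
      simp only [P, Pmat]
      rw [Matrix.mul_diagonal]
      simp only [K, Kmat, Matrix.transpose_apply, Matrix.of_apply]
      rw [kraw_symm N p (k:ℕ) (x:ℕ), kraw_symm N p (k:ℕ) (y:ℕ)]
      ring
    exact (Finset.sum_congr rfl (fun k _ => conv k)).trans
      (Fin.sum_univ_eq_sum_range (fun z : ℕ =>
        wfun N p (1-p) z * krawtchouk N p (x:ℕ) z * krawtchouk N p (y:ℕ) z) (N+1))
  intro a b ha hb hab
  have := hGoff ⟨a, by omega⟩ ⟨b, by omega⟩ (by simp [Fin.ext_iff]; omega)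
  rw [hGentry] at this
  exact this

lemma choose_cast_id (N j : ℕ) (hj : j < N) :
    ((N.choose (j+1)) : ℝ) * ((j:ℝ)+1) = (N.choose j : ℝ) * ((N:ℝ) - (j:ℝ)) := by
  have h := Nat.choose_succ_right_eq N j
  have hcast : ((N.choose (j+1) : ℝ)) * ((j:ℝ)+1) = (N.choose j : ℝ) * ((N - j : ℕ) : ℝ) := by
    exact_mod_cast congrArg (fun z : ℕ => (z : ℝ)) h
  rw [hcast, Nat.cast_sub hj.le]

lemma gsum_diag (N : ℕ) (p : ℝ) (hp : p ≠ 0) (hq : (1:ℝ)-p ≠ 0)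
    (horth : ∀ a b : ℕ, a ≤ N → b ≤ N → a ≠ b → gsum N p (1-p) a b = 0) :
    ∀ j : ℕ, j ≤ N → (N.choose j : ℝ) * (p/(1-p))^j * gsum N p (1-p) j j = 1 := by
  intro j
  induction j with
  | zero =>
    intro _
    have h1 : gsum N p (1-p) 0 0 = 1 := by
      unfold gsum
      rw [show ∑ z ∈ Finset.range (N+1),
            wfun N p (1-p) z * krawtchouk N p 0 z * krawtchouk N p 0 z
          = ∑ z ∈ Finset.range (N+1), wfun N p (1-p) z from
        Finset.sum_congr rfl (fun z _ => by rw [kraw_zero]; ring)]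
      exact wfun_sum N p (1-p) (by ring)
    rw [h1]
    norm_num
  | succ j ih =>
    intro hj1
    have hjN : j < N := by omega
    have hNj : ((N:ℝ) - j) ≠ 0 := by
      have : (j:ℝ) < (N:ℝ) := by exact_mod_cast hjN
      linarith
    have E1 : ∑ z ∈ Finset.range (N+1),
          wfun N p (1-p) z * ((z:ℝ) * krawtchouk N p j z) * krawtchouk N p (j+1) z
        = (p*((N:ℝ)-j)+(1-p)*j) * gsum N p (1-p) j (j+1)
          - p*((N:ℝ)-j) * gsum N p (1-p) (j+1) (j+1)
          - (1-p)*(j:ℝ) * gsum N p (1-p) (j-1) (j+1) := by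
      have pt : ∀ z ∈ Finset.range (N+1),
          wfun N p (1-p) z * ((z:ℝ) * krawtchouk N p j z) * krawtchouk N p (j+1) z
          = (p*((N:ℝ)-j)+(1-p)*j) * (wfun N p (1-p) z * krawtchouk N p j z * krawtchouk N p (j+1) z)
            - p*((N:ℝ)-j) * (wfun N p (1-p) z * krawtchouk N p (j+1) z * krawtchouk N p (j+1) z)
            - (1-p)*(j:ℝ) * (wfun N p (1-p) z * krawtchouk N p (j-1) z * krawtchouk N p (j+1) z) := by
        intro z hz
        rw [Finset.mem_range] at hz
        rw [kraw_xK N p hp j z (by omega)]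
        ring
      rw [Finset.sum_congr rfl pt, Finset.sum_sub_distrib, Finset.sum_sub_distrib,
        ← Finset.mul_sum, ← Finset.mul_sum, ← Finset.mul_sum]
      rfl
    have E2 : ∑ z ∈ Finset.range (N+1),
          wfun N p (1-p) z * ((z:ℝ) * krawtchouk N p (j+1) z) * krawtchouk N p j z
        = (p*((N:ℝ)-((j:ℝ)+1))+(1-p)*((j:ℝ)+1)) * gsum N p (1-p) (j+1) j
          - p*((N:ℝ)-((j:ℝ)+1)) * gsum N p (1-p) (j+2) j
          - (1-p)*((j:ℝ)+1) * gsum N p (1-p) j j := by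
      have pt : ∀ z ∈ Finset.range (N+1),
          wfun N p (1-p) z * ((z:ℝ) * krawtchouk N p (j+1) z) * krawtchouk N p j z
          = (p*((N:ℝ)-((j:ℝ)+1))+(1-p)*((j:ℝ)+1)) * (wfun N p (1-p) z * krawtchouk N p (j+1) z * krawtchouk N p j z)
            - p*((N:ℝ)-((j:ℝ)+1)) * (wfun N p (1-p) z * krawtchouk N p (j+2) z * krawtchouk N p j z)
            - (1-p)*((j:ℝ)+1) * (wfun N p (1-p) z * krawtchouk N p j z * krawtchouk N p j z) := by
        intro z hz
        rw [Finset.mem_range] at hz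
        rw [kraw_xK N p hp (j+1) z (by omega)]
        simp only [Nat.add_sub_cancel]
        push_cast
        ring
      rw [Finset.sum_congr rfl pt, Finset.sum_sub_distrib, Finset.sum_sub_distrib,
        ← Finset.mul_sum, ← Finset.mul_sum, ← Finset.mul_sum]
      rfl
    have hEq : (∑ z ∈ Finset.range (N+1),
          wfun N p (1-p) z * ((z:ℝ) * krawtchouk N p j z) * krawtchouk N p (j+1) z)
        = ∑ z ∈ Finset.range (N+1),
          wfun N p (1-p) z * ((z:ℝ) * krawtchouk N p (j+1) z) * krawtchouk N p j z :=
      Finset.sum_congr rfl (fun z _ => by ring)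
    have hz1 : gsum N p (1-p) j (j+1) = 0 := horth _ _ (by omega) (by omega) (by omega)
    have hz2 : gsum N p (1-p) (j-1) (j+1) = 0 := horth _ _ (by omega) (by omega) (by omega)
    have hz1' : gsum N p (1-p) (j+1) j = 0 := horth _ _ (by omega) (by omega) (by omega)
    have hz3 : p*((N:ℝ)-((j:ℝ)+1)) * gsum N p (1-p) (j+2) j = 0 := by
      by_cases h : j+2 ≤ N
      · rw [horth _ _ (by omega) (by omega) (by omega)]; ring
      · have h0 : (N:ℝ) - ((j:ℝ)+1) = 0 := by
          have : j+1 = N := by omega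
          rw [← this]; push_cast; ring
        rw [h0]; ring
    have h12 : (p*((N:ℝ)-j)+(1-p)*j) * gsum N p (1-p) j (j+1)
          - p*((N:ℝ)-j) * gsum N p (1-p) (j+1) (j+1)
          - (1-p)*(j:ℝ) * gsum N p (1-p) (j-1) (j+1)
        = (p*((N:ℝ)-((j:ℝ)+1))+(1-p)*((j:ℝ)+1)) * gsum N p (1-p) (j+1) j
          - p*((N:ℝ)-((j:ℝ)+1)) * gsum N p (1-p) (j+2) j
          - (1-p)*((j:ℝ)+1) * gsum N p (1-p) j j := by
      rw [← E1, ← E2]; exact hEq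
    rw [hz1, hz2, hz1'] at h12
    have hrec : p*((N:ℝ)-j) * gsum N p (1-p) (j+1) (j+1)
        = (1-p)*((j:ℝ)+1) * gsum N p (1-p) j j := by
      linear_combination -h12 + hz3
    have IH := ih (by omega)
    have hcho := choose_cast_id N j hjN
    have hstep : (p/(1-p))^(j+1)*(1-p) = p * (p/(1-p))^j := by
      rw [pow_succ]; field_simp
    have key : (N.choose (j+1) : ℝ) * (p/(1-p))^(j+1) * gsum N p (1-p) (j+1) (j+1) * (p*((N:ℝ)-j))
        = 1 * (p*((N:ℝ)-j)) := by
      calc (N.choose (j+1) : ℝ) * (p/(1-p))^(j+1) * gsum N p (1-p) (j+1) (j+1) * (p*((N:ℝ)-j))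
          = (N.choose (j+1) : ℝ) * (p/(1-p))^(j+1) * (p*((N:ℝ)-j) * gsum N p (1-p) (j+1) (j+1)) := by ring
        _ = (N.choose (j+1) : ℝ) * (p/(1-p))^(j+1) * ((1-p)*((j:ℝ)+1) * gsum N p (1-p) j j) := by rw [hrec]
        _ = ((N.choose (j+1) : ℝ) * ((j:ℝ)+1)) * ((p/(1-p))^(j+1)*(1-p) * gsum N p (1-p) j j) := by ring
        _ = ((N.choose j : ℝ) * ((N:ℝ)-(j:ℝ))) * ((p/(1-p))^(j+1)*(1-p) * gsum N p (1-p) j j) := by rw [hcho]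
        _ = ((N.choose j : ℝ) * ((N:ℝ)-(j:ℝ))) * (p * (p/(1-p))^j * gsum N p (1-p) j j) := by rw [hstep]
        _ = ((N.choose j : ℝ) * (p/(1-p))^j * gsum N p (1-p) j j) * (p*((N:ℝ)-j)) := by ring
        _ = 1 * (p*((N:ℝ)-j)) := by rw [IH]
    exact mul_right_cancel₀ (mul_ne_zero hp hNj) key

noncomputable def Wmat (N : ℕ) (p : ℝ) : Matrix (Fin (N+1)) (Fin (N+1)) ℝ :=
  Matrix.of fun x j => (N.choose (j:ℕ) : ℝ) * (p/(1-p))^(j:ℕ) * wfun N p (1-p) (x:ℕ)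
    * krawtchouk N p (j:ℕ) (x:ℕ)

lemma KW_one (N : ℕ) (p : ℝ)
    (horth : ∀ a b : ℕ, a ≤ N → b ≤ N → a ≠ b → gsum N p (1-p) a b = 0)
    (hdiag : ∀ j : ℕ, j ≤ N → (N.choose j : ℝ) * (p/(1-p))^j * gsum N p (1-p) j j = 1) :
    Kmat N p * Wmat N p = 1 := by
  ext i j
  rw [Matrix.mul_apply]
  have conv : ∀ x : Fin (N+1), Kmat N p i x * Wmat N p x j
      = (fun z : ℕ => (N.choose (j:ℕ):ℝ) * (p/(1-p))^(j:ℕ)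
          * (wfun N p (1-p) z * krawtchouk N p (i:ℕ) z * krawtchouk N p (j:ℕ) z)) (x:ℕ) := by
    intro x
    simp only [Kmat, Wmat, Matrix.of_apply]
    ring
  rw [(Finset.sum_congr rfl (fun x _ => conv x)).trans
    (Fin.sum_univ_eq_sum_range (fun z : ℕ => (N.choose (j:ℕ):ℝ) * (p/(1-p))^(j:ℕ)
      * (wfun N p (1-p) z * krawtchouk N p (i:ℕ) z * krawtchouk N p (j:ℕ) z)) (N+1))]
  rw [← Finset.mul_sum]
  rw [Matrix.one_apply]
  by_cases hij : i = j
  · subst hij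
    rw [if_pos rfl]
    have := hdiag (i:ℕ) (by omega)
    rw [show (∑ z ∈ Finset.range (N+1),
        wfun N p (1-p) z * krawtchouk N p (i:ℕ) z * krawtchouk N p (i:ℕ) z)
      = gsum N p (1-p) (i:ℕ) (i:ℕ) from rfl]
    linear_combination this
  · rw [if_neg hij]
    rw [show (∑ z ∈ Finset.range (N+1),
        wfun N p (1-p) z * krawtchouk N p (i:ℕ) z * krawtchouk N p (j:ℕ) z)
      = gsum N p (1-p) (i:ℕ) (j:ℕ) from rfl]
    rw [horth (i:ℕ) (j:ℕ) (by omega) (by omega) (Fin.val_ne_of_ne hij)]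
    ring

theorem ehrenfest_semigroup_eq_exp_generator (N : ℕ) (lam α β : ℝ) (hlam : 0 < lam)
    (hα : α ∈ Set.Ioc (0 : ℝ) 1) (hβ : β ∈ Set.Ioc (0 : ℝ) 1)
    (p q : ℝ) (hp : p = α / (α + β)) (hq : q = 1 - p)
    (Q : Matrix (Fin (N + 1)) (Fin (N + 1)) ℝ)
    (hQ : ∀ i j : Fin (N + 1),
      Q i j =
        if (j : ℕ) = (i : ℕ) + 1 then lam * α * ((N : ℝ) - (i : ℕ))
        else if (j : ℕ) + 1 = (i : ℕ) then lam * β * (i : ℕ)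
        else if i = j then -(lam * α * ((N : ℝ) - (i : ℕ))) - lam * β * (i : ℕ)
        else 0)
    (t : ℝ) (ht : 0 ≤ t) (i j : Fin (N + 1)) :
    NormedSpace.exp (t • Q) i j = ehrenfestP N p q lam α β (i : ℕ) (j : ℕ) t := by
  subst hq
  have hab : 0 < α + β := by linarith [hα.1, hβ.1]
  have hp0 : 0 < p := by rw [hp]; exact div_pos hα.1 hab
  have hp1 : p < 1 := by
    rw [hp, div_lt_one hab]; linarith [hβ.1]
  have hpne : p ≠ 0 := ne_of_gt hp0
  have hqne : (1:ℝ) - p ≠ 0 := by linarith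
  set c : ℝ := lam * (α + β) with hc
  have hc0 : c ≠ 0 := ne_of_gt (mul_pos hlam hab)
  have hαc : lam * α = c * p := by
    rw [hp, hc]; field_simp
  have hβc : lam * β = c * (1 - p) := by
    rw [hp, hc]; field_simp; ring
  have hQK := QK N lam α β p c hpne hαc hβc Q hQ
  have hPQ := PQsym N lam α β p c hαc hβc Q hQ
  have horth := gsum_offdiag N p c hc0 Q hQK hPQ
  have hdiag := gsum_diag N p hpne hqne horth
  have hKW := KW_one N p horth hdiag
  have hM : IsUnit (Kmat N p) := by
    have : Invertible (Kmat N p) := invertibleOfRightInverse _ _ hKW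
    exact isUnit_of_invertible _
  have hinv : (Kmat N p)⁻¹ = Wmat N p := Matrix.inv_eq_right_inv hKW
  have hQdec : Q = Kmat N p * Dmat N c * (Kmat N p)⁻¹ := by
    rw [hinv]
    calc Q = Q * (Kmat N p * Wmat N p) := by rw [hKW, Matrix.mul_one]
      _ = (Q * Kmat N p) * Wmat N p := by rw [Matrix.mul_assoc]
      _ = Kmat N p * Dmat N c * Wmat N p := by rw [hQK]
  have hsmul : t • Q = Kmat N p * (t • Dmat N c) * (Kmat N p)⁻¹ := by
    rw [hQdec, mul_smul_comm, smul_mul_assoc]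
  have hdexp : t • Dmat N c = Matrix.diagonal (fun x : Fin (N+1) => t * (-(c * ((x:ℕ):ℝ)))) := by
    simp only [Dmat]
    rw [show (fun x : Fin (N+1) => t * (-(c * ((x:ℕ):ℝ))))
      = t • (fun x : Fin (N+1) => -(c * ((x:ℕ):ℝ))) from rfl, Matrix.diagonal_smul]
  rw [hsmul, Matrix.exp_conj _ _ hM, hdexp, Matrix.exp_diagonal, hinv]
  rw [Matrix.mul_apply]
  have conv : ∀ x : Fin (N+1),
      (Kmat N p * Matrix.diagonal (NormedSpace.exp fun x : Fin (N+1) => t * (-(c * ((x:ℕ):ℝ))))) i x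
        * Wmat N p x j
      = (fun z : ℕ => (N.choose (j:ℕ) : ℝ) * (p/(1-p))^(j:ℕ)
          * ((N.choose z : ℝ) * p^z * (1-p)^(N-z) * krawtchouk N p (i:ℕ) z * krawtchouk N p (j:ℕ) z
            * Real.exp (-(lam * (α+β) * (z:ℝ) * t)))) (x:ℕ) := by
    intro x
    rw [Matrix.mul_diagonal]
    simp only [Kmat, Wmat, Matrix.of_apply, Pi.coe_exp]
    rw [show NormedSpace.exp (t * (-(c * ((x:ℕ):ℝ)))) = Real.exp (-(lam * (α+β) * ((x:ℕ):ℝ) * t)) by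
      rw [Real.exp_eq_exp_ℝ]; congr 1; rw [hc]; ring]
    unfold wfun
    ring
  rw [(Finset.sum_congr rfl (fun x _ => conv x)).trans
    (Fin.sum_univ_eq_sum_range (fun z : ℕ => (N.choose (j:ℕ) : ℝ) * (p/(1-p))^(j:ℕ)
      * ((N.choose z : ℝ) * p^z * (1-p)^(N-z) * krawtchouk N p (i:ℕ) z * krawtchouk N p (j:ℕ) z
        * Real.exp (-(lam * (α+β) * (z:ℝ) * t)))) (N+1))]
  unfold ehrenfestP
  rw [Finset.mul_sum]
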